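/- Suppose b j = γ for all j, where γ ∈ [0,1). Then every row sum of R equals γ (i.e. R.mulVec 1 = γ·1), γ is a complex eigenvalue of R, and every complex eigenvalue μ of R satisfies |μ| ≤ γ; hence the spectral radius of R equals γ. -/

import Mathlib

open Matrix


lemma spec_iff_vec {n : ℕ} (M : Matrix (Fin n) (Fin n) ℂ) (μ : ℂ) :
    μ ∈ spectrum ℂ M ↔ ∃ v, v ≠ 0 ∧ M.mulVec v = μ • v := by
  rw [spectrum.mem_iff, Algebra.algebraMap_eq_smul_one]
  constructor
  · intro h
    have hdet : (μ • (1:Matrix (Fin n) (Fin n) ℂ) - M).det = 0 := by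
      by_contra hd
      exact h ((Matrix.isUnit_iff_isUnit_det _).2 (isUnit_iff_ne_zero.2 hd))
    obtain ⟨v, hv, hveq⟩ := (Matrix.exists_mulVec_eq_zero_iff).2 hdet
    refine ⟨v, hv, ?_⟩
    rw [Matrix.sub_mulVec, Matrix.smul_mulVec, Matrix.one_mulVec, sub_eq_zero] at hveq
    exact hveq.symm
  · rintro ⟨v, hv, hM⟩ hunit
    have hdet : (μ • (1:Matrix (Fin n) (Fin n) ℂ) - M).det ≠ 0 :=
      ((Matrix.isUnit_iff_isUnit_det _).1 hunit).ne_zero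
    have : ∃ w, w ≠ 0 ∧ (μ • (1:Matrix (Fin n) (Fin n) ℂ) - M).mulVec w = 0 := by
      refine ⟨v, hv, ?_⟩
      rw [Matrix.sub_mulVec, Matrix.smul_mulVec, Matrix.one_mulVec, hM, sub_self]
    exact hdet (Matrix.exists_mulVec_eq_zero_iff.1 this)

lemma stoch_eig {n : ℕ} (F : Matrix (Fin n) (Fin n) ℝ)
    (hFnonneg : ∀ i j, 0 ≤ F i j) (hFrow : ∀ i, ∑ j, F i j = 1)
    (v : Fin n → ℂ) (hv : v ≠ 0) (lam : ℂ)
    (h : (F.map Complex.ofReal).mulVec v = lam • v) : ‖lam‖ ≤ 1 := by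
  have hne : (Finset.univ : Finset (Fin n)).Nonempty := by
    obtain ⟨j, hj⟩ := Function.ne_iff.1 hv
    exact ⟨j, Finset.mem_univ j⟩
  obtain ⟨i₀, -, hmax⟩ := Finset.exists_max_image Finset.univ (fun i => ‖v i‖) hne
  have hpos : 0 < ‖v i₀‖ := by
    obtain ⟨j, hj⟩ := Function.ne_iff.1 hv
    exact lt_of_lt_of_le (by simpa using hj) (hmax j (Finset.mem_univ j))
  have heq : lam * v i₀ = ∑ j, (F i₀ j : ℂ) * v j := by
    have := congrFun h i₀
    simp [Matrix.mulVec, dotProduct, Matrix.map_apply] at this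
    rw [this]
  have hb : ‖lam * v i₀‖ ≤ ‖v i₀‖ := by
    rw [heq]
    calc ‖∑ j, (F i₀ j : ℂ) * v j‖
        ≤ ∑ j, ‖(F i₀ j : ℂ) * v j‖ := by
          exact norm_sum_le _ _
      _ = ∑ j, F i₀ j * ‖v j‖ := by
          refine Finset.sum_congr rfl fun j _ => ?_
          rw [norm_mul, Complex.norm_real, Real.norm_eq_abs, abs_of_nonneg (hFnonneg i₀ j)]
      _ ≤ ∑ j, F i₀ j * ‖v i₀‖ := by
          refine Finset.sum_le_sum fun j _ => ?_
          exact mul_le_mul_of_nonneg_left (hmax j (Finset.mem_univ j)) (hFnonneg i₀ j)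
      _ = ‖v i₀‖ := by rw [← Finset.sum_mul, hFrow i₀, one_mul]
  rw [norm_mul] at hb
  exact le_of_mul_le_mul_right (by simpa using hb) hpos


/-- Suppose `b j = γ` for all `j`, where `γ ∈ [0,1)`. Then every
row sum of `R` equals `γ` (i.e. `R.mulVec 1 = γ·1`), `γ` is a complex
eigenvalue of `R`, and every complex eigenvalue `μ` of `R` satisfies `|μ| ≤ γ`;
hence the spectral radius of `R` equals `γ`. -/
theorem stmt_10 (n : ℕ) (hn : 1 ≤ n)
    (F : Matrix (Fin n) (Fin n) ℝ)
    (hFnonneg : ∀ i j, 0 ≤ F i j)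
    (hFrow : ∀ i, ∑ j, F i j = 1)
    (b : Fin n → ℝ) (hb0 : ∀ j, 0 ≤ b j) (hb1 : ∀ j, b j < 1)
    (γ : ℝ) (hγ0 : 0 ≤ γ) (hγ1 : γ < 1) (hbγ : ∀ j, b j = γ)
    (K : Matrix (Fin n) (Fin n) ℝ)
    (hK : ∀ i j, K i j = F i j * b j)
    (hInv : IsUnit (1 - K))
    (S : Matrix (Fin n) (Fin n) ℝ)
    (hS : S = (1 - K)⁻¹ * F)
    (A R : Matrix (Fin n) (Fin n) ℝ)
    (hA : ∀ i j, A i j = (1 - b i) * S i j * (1 - b j))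
    (hR : ∀ i j, R i j = (1 - b i) * S i j * b j) :
    R.mulVec (fun _ => 1) = (fun _ => γ) ∧
    (γ : ℂ) ∈ spectrum ℂ (R.map Complex.ofReal) ∧
    (∀ μ : ℂ, μ ∈ spectrum ℂ (R.map Complex.ofReal) → ‖μ‖ ≤ γ) ∧
    IsGreatest ((fun z : ℂ => ‖z‖) '' spectrum ℂ (R.map Complex.ofReal)) γ := by
  have h1γ : (0:ℝ) < 1 - γ := by linarith
  have hKγ : K = γ • F := by
    ext i j; rw [hK, hbγ]; simp [Matrix.smul_apply]; ring
  have hdetU : IsUnit (1 - K).det := (Matrix.isUnit_iff_isUnit_det _).1 hInv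
  have hKS : (1 - K) * S = F := by
    rw [hS, ← Matrix.mul_assoc, Matrix.mul_nonsing_inv _ hdetU, Matrix.one_mul]
  have hRS : R = (γ * (1 - γ)) • S := by
    ext i j; rw [hR, hbγ, hbγ]; simp [Matrix.smul_apply]; ring
  have hFrow' : F.mulVec (fun _ => (1:ℝ)) = fun _ => 1 := by
    funext i; simp [Matrix.mulVec, dotProduct]; exact hFrow i
  have hKrow : (1 - K).mulVec (fun _ => (1-γ)⁻¹) = fun _ => 1 := by
    funext i
    simp only [Matrix.mulVec, dotProduct, Matrix.sub_apply, hKγ,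
      Matrix.smul_apply, Matrix.one_apply, smul_eq_mul, sub_mul, Finset.sum_sub_distrib]
    have h2 : ∑ x, γ * F i x * (1-γ)⁻¹ = γ * (1-γ)⁻¹ := by
      rw [← Finset.sum_mul, ← Finset.mul_sum, hFrow i]; ring
    simp [ite_mul, h2]
    field_simp
  have hSrow : S.mulVec (fun _ => (1:ℝ)) = fun _ => (1-γ)⁻¹ := by
    have hB : (1 - K).mulVec (S.mulVec (fun _ => 1)) = fun _ => 1 := by
      rw [Matrix.mulVec_mulVec, hKS, hFrow']
    have := congrArg (Matrix.mulVec (1 - K)⁻¹) (hB.trans hKrow.symm)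
    simpa [Matrix.mulVec_mulVec, ← Matrix.mul_assoc, Matrix.nonsing_inv_mul _ hdetU, Matrix.one_mul, Matrix.one_mulVec] using this
  have hrow : R.mulVec (fun _ => 1) = (fun _ => γ) := by
    rw [hRS, Matrix.smul_mulVec, hSrow]
    funext i
    simp [smul_eq_mul]
    field_simp

  have hSe : ∀ i j, S i j = F i j + γ * ∑ k, F i k * S k j := by
    intro i j
    have h := congrFun (congrFun hKS i) j
    rw [Matrix.mul_apply] at h
    have h2 : ∑ k, (1 - K) i k * S k j = S i j - γ * ∑ k, F i k * S k j := by
      calc ∑ k, (1 - K) i k * S k j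
          = ∑ k, ((if i = k then (1:ℝ) else 0) * S k j - γ * (F i k * S k j)) := by
            refine Finset.sum_congr rfl fun k _ => ?_
            rw [Matrix.sub_apply, Matrix.one_apply, hKγ, Matrix.smul_apply, smul_eq_mul]
            ring
        _ = S i j - γ * ∑ k, F i k * S k j := by
            rw [Finset.sum_sub_distrib]
            congr 1
            · simp [ite_mul]
            · rw [Finset.mul_sum]
    rw [h2] at h
    linarith
  have hRsum : ∀ i, ∑ j, R i j = γ := by
    intro i
    have := congrFun hrow i
    simpa [Matrix.mulVec, dotProduct] using this
  have hspec : (γ : ℂ) ∈ spectrum ℂ (R.map Complex.ofReal) := by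
    rw [spec_iff_vec]
    refine ⟨fun _ => 1, ?_, ?_⟩
    · intro h
      exact one_ne_zero (congrFun h ⟨0, hn⟩)
    · funext i
      have hc : ∑ j, ((R i j : ℂ)) = ((γ:ℝ):ℂ) := by
        exact_mod_cast congrArg Complex.ofReal (hRsum i)
      simpa [Matrix.mulVec, dotProduct, Matrix.map_apply] using hc
  have hbound : ∀ μ : ℂ, μ ∈ spectrum ℂ (R.map Complex.ofReal) → ‖μ‖ ≤ γ := by
    intro μ hμ
    obtain ⟨v, hv, hvec⟩ := (spec_iff_vec _ μ).1 hμ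
    obtain ⟨j₀, hj₀⟩ := Function.ne_iff.1 hv
    rcases eq_or_lt_of_le hγ0 with hγz | hγp
    · -- γ = 0 : R = 0
      have hR0 : R = 0 := by rw [hRS, ← hγz]; simp
      have : μ * v j₀ = 0 := by
        have := congrFun hvec j₀
        rw [hR0] at this
        simpa [Matrix.mulVec, dotProduct] using this.symm
      rcases mul_eq_zero.1 this with h | h
      · simp [h, ← hγz]
      · exact absurd h hj₀
    · -- γ > 0
      set c : ℂ := μ / ((γ : ℂ) * (1 - γ)) with hc
      have hγne : (γ:ℂ) ≠ 0 := Complex.ofReal_ne_zero.2 (ne_of_gt hγp)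
      have hγγ : ((γ : ℂ) * (1 - γ)) ≠ 0 := by
        have h2 : (1 - (γ:ℂ)) ≠ 0 := by
          intro h; apply absurd hγ1
          have : (γ:ℂ) = 1 := by linear_combination -h
          rw [show γ = (1:ℝ) from by exact_mod_cast this]; simp
        exact mul_ne_zero hγne (by push_cast; exact h2)
      have hμc : μ = (γ:ℂ) * (1 - γ) * c := by rw [hc, mul_div_assoc', eq_div_iff hγγ]; ring
      have hw : (S.map Complex.ofReal).mulVec v = c • v := by
        funext i
        have h1 := congrFun hvec i
        have h2 : ∑ j, (R i j : ℂ) * v j = μ * v i := by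
          simpa [Matrix.mulVec, dotProduct, Matrix.map_apply] using h1
        have h3 : ∀ j, (R i j : ℂ) = (γ:ℂ) * (1-γ) * S i j := by
          intro j; rw [hRS]; simp only [Matrix.smul_apply, smul_eq_mul]; push_cast; ring
        simp only [Matrix.mulVec, dotProduct, Matrix.map_apply, Pi.smul_apply,
          smul_eq_mul]
        have h4 : (γ:ℂ) * (1-γ) * ∑ j, (S i j : ℂ) * v j = μ * v i := by
          rw [Finset.mul_sum, ← h2]
          exact Finset.sum_congr rfl fun j _ => by rw [h3]; ring
        have h5 := congrArg (fun z => ((γ:ℂ) * (1 - γ))⁻¹ * z) h4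
        rw [inv_mul_cancel_left₀ hγγ] at h5
        rw [h5, hc]; ring
      have hS1 : ∀ k, ∑ j, (S k j : ℂ) * v j = c * v k := by
        intro k
        have := congrFun hw k
        simpa [Matrix.mulVec, dotProduct, Matrix.map_apply] using this
      set T : Fin n → ℂ := fun i => ∑ j, (F i j : ℂ) * v j with hT
      have hSeC : ∀ i j, (S i j : ℂ) = (F i j:ℂ) + (γ:ℂ) * ∑ k, (F i k:ℂ) * (S k j:ℂ) := by
        intro i j
        rw [show ((S i j : ℝ) : ℂ) = ((F i j + γ * ∑ k, F i k * S k j : ℝ) : ℂ) from by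
          rw [← hSe]]
        push_cast
        ring
      have key : ∀ i, c * v i = (1 + (γ:ℂ) * c) * T i := by
        intro i
        rw [← hS1 i]
        have e1 : ∀ j, (S i j : ℂ) * v j
            = (F i j : ℂ) * v j + ∑ k, (γ:ℂ) * ((F i k : ℂ) * ((S k j : ℂ) * v j)) := by
          intro j
          rw [hSeC i j, add_mul, Finset.mul_sum, Finset.sum_mul]
          congr 1
          exact Finset.sum_congr rfl fun k _ => by ring
        calc ∑ j, (S i j : ℂ) * v j
            = ∑ j, ((F i j : ℂ) * v j + ∑ k, (γ:ℂ) * ((F i k : ℂ) * ((S k j : ℂ) * v j))) :=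
              Finset.sum_congr rfl fun j _ => e1 j
          _ = T i + ∑ j, ∑ k, (γ:ℂ) * ((F i k : ℂ) * ((S k j : ℂ) * v j)) := by
              rw [Finset.sum_add_distrib, hT]
          _ = T i + ∑ k, (γ:ℂ) * ((F i k : ℂ) * ∑ j, (S k j : ℂ) * v j) := by
              rw [Finset.sum_comm]
              congr 1
              exact Finset.sum_congr rfl fun k _ => by
                rw [← Finset.mul_sum, ← Finset.mul_sum]
          _ = T i + ∑ k, (γ:ℂ) * ((F i k : ℂ) * (c * v k)) := by
              congr 1
              exact Finset.sum_congr rfl fun k _ => by rw [hS1]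
          _ = (1 + (γ:ℂ) * c) * T i := by
              rw [hT, show ∑ k, (γ:ℂ) * ((F i k : ℂ) * (c * v k))
                  = (γ:ℂ) * c * ∑ k, (F i k:ℂ) * v k from by
                rw [Finset.mul_sum]
                exact Finset.sum_congr rfl fun k _ => by ring]
              ring
      by_cases hden : (1 + (γ:ℂ) * c) = 0
      · exfalso
        have hczero : c ≠ 0 := by
          intro h0; rw [h0, mul_zero, add_zero] at hden; exact one_ne_zero hden
        have : v = 0 := by
          funext i
          have := key i
          rw [hden, zero_mul] at this
          exact (mul_eq_zero.1 this).resolve_left hczero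
        exact hv this
      · set lam : ℂ := c / (1 + (γ:ℂ) * c) with hlam
        have hFv : (F.map Complex.ofReal).mulVec v = lam • v := by
          funext i
          have := key i
          simp only [Matrix.mulVec, dotProduct, Matrix.map_apply, Pi.smul_apply,
            smul_eq_mul, hlam]
          rw [div_mul_eq_mul_div, eq_div_iff hden]
          rw [this]
          simp only [hT]
          ring
        have habs := stoch_eig F hFnonneg hFrow v hv lam hFv
        have hclam : c * (1 - (γ:ℂ) * lam) = lam := by
          rw [hlam, mul_sub, mul_one, show c * ((γ:ℂ) * (c / (1 + (γ:ℂ) * c))) = (γ:ℂ) * c * c / (1 + (γ:ℂ) * c) by ring,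
            eq_div_iff hden, sub_mul, div_mul_cancel₀ _ hden]; ring
        have hglne : (1:ℂ) - (γ:ℂ) * lam ≠ 0 := by
          intro h
          have : (γ:ℂ) * lam = 1 := by linear_combination -h
          have habs2 : γ * ‖lam‖ = 1 := by
            have := congrArg Norm.norm this
            rwa [norm_mul, Complex.norm_real, Real.norm_eq_abs, abs_of_nonneg hγ0, norm_one] at this
          nlinarith [norm_nonneg lam]
        have hmueq : μ * (1 - (γ:ℂ) * lam) = (γ:ℂ) * (1 - γ) * lam := by
          rw [hμc]; linear_combination ((γ:ℂ) * (1-γ)) * hclam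
        have habsμ : ‖μ‖ * ‖1 - (γ:ℂ)*lam‖ = γ * (1-γ) * ‖lam‖ := by
          have := congrArg Norm.norm hmueq
          rw [norm_mul, norm_mul, norm_mul, Complex.norm_real, Real.norm_eq_abs, abs_of_nonneg hγ0] at this
          rw [this]
          congr 1
          rw [show ((1:ℂ) - γ) = ((1 - γ : ℝ) : ℂ) from by push_cast; ring, Complex.norm_real, Real.norm_eq_abs,
            abs_of_nonneg (by linarith)]
        have hd : 0 < ‖1 - (γ:ℂ)*lam‖ := norm_pos_iff.2 hglne
        have hlow : 1 - γ * ‖lam‖ ≤ ‖1 - (γ:ℂ)*lam‖ := by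
          have := norm_sub_norm_le (1:ℂ) ((γ:ℂ)*lam)
          simpa [norm_mul, Complex.norm_real, abs_of_nonneg hγ0] using this
        have h1 : γ * (1-γ) * ‖lam‖ ≤ γ * (1 - γ * ‖lam‖) := by
          nlinarith [norm_nonneg lam]
        have h2 : ‖μ‖ * ‖1 - (γ:ℂ)*lam‖ ≤ γ * ‖1 - (γ:ℂ)*lam‖ := by
          rw [habsμ]
          calc γ * (1-γ) * ‖lam‖ ≤ γ * (1 - γ * ‖lam‖) := h1
            _ ≤ γ * ‖1 - (γ:ℂ)*lam‖ := by
                exact mul_le_mul_of_nonneg_left hlow hγ0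
        exact le_of_mul_le_mul_right h2 hd
  refine ⟨hrow, hspec, hbound, ⟨⟨(γ:ℂ), hspec, ?_⟩, ?_⟩⟩
  · simp [Complex.norm_real, abs_of_nonneg hγ0]
  · rintro x ⟨μ, hμ, rfl⟩
    exact hbound μ hμ
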